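/- Fix integers m ≥ 1 and d > 2m and define F = (f_m, …, f_d) : {x ∈ ℝ^{d−m+1} : x_d < 1} → ℝ^{d−m+1} by f_m(x) = 1 − (m/(1−x_d) + 1)·x_m, f_k(x) = (m/(1−x_d))·x_{k−1} − (m/(1−x_d) + 1)·x_k for k = m+1, …, d−1, and f_d(x) = (m/(1−x_d))·x_{d−1} − x_d. Then for every x = (x_m,…,x_d) with x_d < 1, the characteristic polynomial P(λ) = det(DF(x) − λI) of the Jacobian matrix DF(x) factors as P(λ) = (−1)^{d−m+1}·(1+λ)·Q(1+λ), where, with c = m/(1−x_d), Q(t) = t^{d−m} + Σ_{i=0}^{d−m−1} c^{d−m−i}·t^i·( C(d−m, i) − Σ_{k=m+i}^{d−1} C(k−m, i)·x_k/(1−x_d) ). In particular −1 is always an eigenvalue of DF(x), and if moreover x_m, …, x_d ≥ 0 and x_m + ⋯ + x_d ≤ 1, then all coefficients of Q are nonnegative. -/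

import Mathlib

/-- The map `F = (f_m, …, f_d)` from the degree-evolution dynamics: coordinates are indexed by
`k = m, …, d` (other coordinates are irrelevant). -/
noncomputable def uaF (m d : ℕ) (x : ℕ → ℝ) (k : ℕ) : ℝ :=
  if k = m then 1 - ((m : ℝ) / (1 - x d) + 1) * x m
  else if k = d then ((m : ℝ) / (1 - x d)) * x (d - 1) - x d
  else ((m : ℝ) / (1 - x d)) * x (k - 1) - ((m : ℝ) / (1 - x d) + 1) * x k

/-- The Jacobian matrix `DF(x)` of `F = (f_m, …, f_d)` at `x`: its `(i,j)` entry is the partial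
derivative `∂f_{m+i}/∂x_{m+j}` at `x`. -/
noncomputable def uaJacobian (m d : ℕ) (x : ℕ → ℝ) :
    Matrix (Fin (d - m + 1)) (Fin (d - m + 1)) ℝ :=
  Matrix.of fun i j =>
    deriv (fun t => uaF m d (Function.update x (m + (j : ℕ)) t) (m + (i : ℕ)))
      (x (m + (j : ℕ)))

/-- The polynomial `Q(t)` from the factorization of the characteristic polynomial. -/
noncomputable def uaQ (m d : ℕ) (x : ℕ → ℝ) (t : ℝ) : ℝ :=
  t ^ (d - m) + ∑ i ∈ Finset.range (d - m),
    ((m : ℝ) / (1 - x d)) ^ (d - m - i) * t ^ i *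
      (((d - m).choose i : ℝ) -
        ∑ k ∈ Finset.Icc (m + i) (d - 1), (((k - m).choose i : ℝ)) * x k / (1 - x d))

open Finset in
lemma detAux (a c : ℝ) : ∀ (n : ℕ) (v : Fin (n+1) → ℝ) (M : Matrix (Fin (n+1)) (Fin (n+1)) ℝ),
    (∀ i j : Fin (n+1), M i j =
      if (j : ℕ) = n then v i
      else if (i : ℕ) = (j : ℕ) then a
      else if (i : ℕ) = (j : ℕ) + 1 then c else 0) →
    M.det = ∑ i : Fin (n+1), (-1) ^ ((i : ℕ) + n) * v i * a ^ (i : ℕ) * c ^ (n - (i : ℕ)) := by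
  intro n
  induction n with
  | zero =>
    intro v M hM
    rw [Matrix.det_fin_one, hM]
    simp
  | succ n ih =>
    intro v M hM
    rw [Matrix.det_succ_row_zero, Fin.sum_univ_castSucc, Fin.sum_univ_succ]
    have hz : ∀ j : Fin n,
        (-1:ℝ) ^ ((j.succ.castSucc : Fin (n+2)) : ℕ) * M 0 j.succ.castSucc *
          Matrix.det (M.submatrix Fin.succ j.succ.castSucc.succAbove) = 0 := by
      intro j
      have h0 : M 0 j.succ.castSucc = 0 := by
        rw [hM]
        simp only [Fin.coe_castSucc, Fin.val_succ, Fin.val_zero]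
        split_ifs <;> first | rfl | (exfalso; omega)
      rw [h0]; ring
    rw [Finset.sum_congr rfl (fun j _ => hz j), Finset.sum_const_zero, add_zero]
    -- first term
    have h00 : M 0 (Fin.castSucc 0) = a := by
      rw [hM]; simp only [Fin.castSucc_zero, Fin.coe_castSucc, Fin.val_zero]
      rw [if_neg (by omega), if_pos trivial]
    have h0last : M 0 (Fin.last (n+1)) = v 0 := by
      rw [hM]; simp only [Fin.val_last]
      rw [if_pos trivial]
    -- submatrix at column 0 : same structure, v ∘ succ
    have hsub0 : Matrix.det (M.submatrix Fin.succ (Fin.castSucc (0 : Fin (n+1))).succAbove)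
        = ∑ i : Fin (n+1), (-1) ^ ((i : ℕ) + n) * v i.succ * a ^ (i : ℕ) * c ^ (n - (i : ℕ)) := by
      apply ih (fun i => v i.succ)
      intro i j
      simp only [Matrix.submatrix_apply, Fin.castSucc_zero, Fin.zero_succAbove]
      rw [hM]
      simp only [Fin.val_succ]
      split_ifs with h1 h2 h3 h4 h5 h6 h7 <;> first | rfl | omega
    -- submatrix at last column : upper triangular with diagonal c
    have hsubL : Matrix.det (M.submatrix Fin.succ (Fin.last (n+1)).succAbove) = c ^ (n+1) := by
      have hut : (M.submatrix Fin.succ (Fin.last (n+1)).succAbove).BlockTriangular id := by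
        intro i j hij
        simp only [Matrix.submatrix_apply, Fin.succAbove_last_apply]
        rw [hM]
        simp only [Fin.val_succ, Fin.coe_castSucc, id] at hij ⊢
        rw [if_neg (by omega), if_neg (by omega), if_neg (by omega)]
      rw [Matrix.det_of_upperTriangular hut]
      have : ∀ i : Fin (n+1), (M.submatrix Fin.succ (Fin.last (n+1)).succAbove) i i = c := by
        intro i
        simp only [Matrix.submatrix_apply, Fin.succAbove_last_apply]
        rw [hM]
        simp only [Fin.val_succ, Fin.coe_castSucc]
        rw [if_neg (by omega), if_neg (by omega), if_pos trivial]
      rw [Finset.prod_congr rfl (fun i _ => this i)]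
      simp
    rw [h00, h0last, hsub0, hsubL]
    have key : ∀ i : Fin (n+1),
        (-1:ℝ) ^ (((i:ℕ)+1) + (n+1)) * v i.succ * a ^ ((i:ℕ)+1) * c ^ ((n+1) - ((i:ℕ)+1))
        = a * ((-1) ^ ((i:ℕ) + n) * v i.succ * a ^ (i:ℕ) * c ^ (n - (i:ℕ))) := by
      intro i
      have h2 : n + 1 - ((i:ℕ)+1) = n - (i:ℕ) := by omega
      have h1 : ((i:ℕ)+1) + (n+1) = ((i:ℕ)+n) + 2 := by omega
      rw [h2, h1, pow_succ, pow_succ, pow_succ]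
      ring
    conv_rhs => rw [Fin.sum_univ_succ]
    simp only [Fin.val_succ, Fin.val_zero, Fin.coe_castSucc, Fin.castSucc_zero, Fin.val_last,
      pow_zero, one_mul, Nat.sub_zero, zero_add]
    rw [Finset.sum_congr rfl (fun i _ => key i), ← Finset.mul_sum]
    ring

lemma derivLin1 (A B t0 : ℝ) : deriv (fun t => A - B * t) t0 = -B := by
  have h : HasDerivAt (fun t : ℝ => A - B * t) (-(B * 1)) t0 :=
    ((hasDerivAt_id t0).const_mul B).const_sub A
  simpa using h.deriv

lemma derivLin2 (A B t0 : ℝ) : deriv (fun t => B * t - A) t0 = B := by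
  have h : HasDerivAt (fun t : ℝ => B * t - A) (B * 1) t0 :=
    ((hasDerivAt_id t0).const_mul B).sub_const A
  simpa using h.deriv

lemma hderC (m : ℕ) (X : ℝ) (hX : X < 1) :
    HasDerivAt (fun t : ℝ => (m:ℝ)/(1-t)) ((m:ℝ)/(1-X)^2) X := by
  have hne : (1:ℝ) - X ≠ 0 := sub_ne_zero.mpr (ne_of_gt hX)
  have h1 : HasDerivAt (fun t : ℝ => (1:ℝ) - t) (-1 : ℝ) X := (hasDerivAt_id X).const_sub 1
  have h2 := (h1.inv hne).const_mul (m:ℝ)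
  simp only [div_eq_mul_inv]
  exact h2.congr_deriv (by ring)

lemma uaEntries (m d : ℕ) (hm : 1 ≤ m) (hd : 2 * m < d) (x : ℕ → ℝ) (hx : x d < 1)
    (i j : Fin (d - m + 1)) :
    uaJacobian m d x i j =
    if (j : ℕ) = d - m then
      (if (i : ℕ) = d - m then (m:ℝ)/(1-x d)^2 * x (d-1) - 1
       else if (i : ℕ) = 0 then -((m:ℝ)/(1-x d)^2 * x m)
       else (m:ℝ)/(1-x d)^2 * (x (m+(i:ℕ)-1) - x (m+(i:ℕ))))
    else if (i : ℕ) = (j : ℕ) then -((m:ℝ)/(1-x d) + 1)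
    else if (i : ℕ) = (j : ℕ)+1 then (m:ℝ)/(1-x d)
    else 0 := by
  have hi := i.isLt
  have hj := j.isLt
  simp only [uaJacobian, Matrix.of_apply]
  by_cases hjN : (j : ℕ) = d - m
  · -- column corresponding to x_d
    have hmj : m + (j : ℕ) = d := by omega
    rw [if_pos hjN, hmj]
    by_cases hiN : (i : ℕ) = d - m
    · rw [if_pos hiN]
      have hmi : m + (i : ℕ) = d := by omega
      have hfun : (fun t => uaF m d (Function.update x d t) (m + (i : ℕ)))
          = fun t => (m:ℝ)/(1-t) * x (d-1) - t := by
        funext t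
        rw [hmi, uaF, if_neg (by omega), if_pos rfl, Function.update_self,
            Function.update_of_ne (by omega : d - 1 ≠ d)]
      rw [hfun]
      have h := ((hderC m (x d) hx).mul_const (x (d-1))).sub (hasDerivAt_id (x d))
      exact h.deriv
    · rw [if_neg hiN]
      by_cases hi0 : (i : ℕ) = 0
      · rw [if_pos hi0]
        have hfun : (fun t => uaF m d (Function.update x d t) (m + (i : ℕ)))
            = fun t => 1 - ((m:ℝ)/(1-t) + 1) * x m := by
          funext t
          rw [show m + (i : ℕ) = m by omega, uaF, if_pos rfl, Function.update_self,
              Function.update_of_ne (by omega : m ≠ d)]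
        rw [hfun]
        exact (((hderC m (x d) hx).add_const 1).mul_const (x m)).const_sub 1 |>.deriv
      · rw [if_neg hi0]
        have h1 : m + (i : ℕ) ≠ m := by omega
        have h2 : m + (i : ℕ) ≠ d := by omega
        have hfun : (fun t => uaF m d (Function.update x d t) (m + (i : ℕ)))
            = fun t => (m:ℝ)/(1-t) * x (m+(i:ℕ)-1) - ((m:ℝ)/(1-t) + 1) * x (m+(i:ℕ)) := by
          funext t
          rw [uaF, if_neg h1, if_neg h2, Function.update_self,
              Function.update_of_ne (by omega : m + (i:ℕ) - 1 ≠ d),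
              Function.update_of_ne h2]
        rw [hfun]
        have h := ((hderC m (x d) hx).mul_const (x (m+(i:ℕ)-1))).sub
          (((hderC m (x d) hx).add_const 1).mul_const (x (m+(i:ℕ))))
        exact h.deriv.trans (by ring)
  · rw [if_neg hjN]
    have hdj : d ≠ m + (j : ℕ) := by omega
    by_cases hi0 : (i : ℕ) = 0
    · by_cases hj0 : (j : ℕ) = 0
      · have hfun : (fun t => uaF m d (Function.update x (m + (j:ℕ)) t) (m + (i : ℕ)))
            = fun t => 1 - ((m:ℝ)/(1-x d) + 1) * t := by
          funext t
          have hu1 : Function.update x (m + (j:ℕ)) t d = x d := Function.update_of_ne hdj _ _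
          have hu2 : Function.update x (m + (j:ℕ)) t m = t := by
            rw [show m + (j:ℕ) = m by omega, Function.update_self]
          rw [show m + (i : ℕ) = m by omega, uaF, if_pos rfl, hu1, hu2]
        rw [hfun, if_pos (by omega : (i:ℕ) = (j:ℕ)), derivLin1]
      · have hfun : (fun t => uaF m d (Function.update x (m + (j:ℕ)) t) (m + (i : ℕ)))
            = fun t => 1 - ((m:ℝ)/(1-x d) + 1) * x m := by
          funext t
          rw [show m + (i : ℕ) = m by omega, uaF, if_pos rfl,
              Function.update_of_ne hdj, Function.update_of_ne (by omega : m ≠ m + (j:ℕ))]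
        rw [hfun, if_neg (by omega), if_neg (by omega), deriv_const]
    · by_cases hiN : (i : ℕ) = d - m
      · have hmi : m + (i : ℕ) = d := by omega
        by_cases hjc : (i : ℕ) = (j : ℕ) + 1
        · have hfun : (fun t => uaF m d (Function.update x (m + (j:ℕ)) t) (m + (i : ℕ)))
              = fun t => (m:ℝ)/(1-x d) * t - x d := by
            funext t
            have hu2 : Function.update x (m + (j:ℕ)) t (d-1) = t := by
              rw [show d - 1 = m + (j:ℕ) by omega]; exact Function.update_self _ _ _
            rw [hmi, uaF, if_neg (by omega), if_pos rfl, Function.update_of_ne hdj, hu2]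
          rw [hfun, if_neg (by omega), if_pos hjc, derivLin2]
        · have hfun : (fun t => uaF m d (Function.update x (m + (j:ℕ)) t) (m + (i : ℕ)))
              = fun t => (m:ℝ)/(1-x d) * x (d-1) - x d := by
            funext t
            rw [hmi, uaF, if_neg (by omega), if_pos rfl, Function.update_of_ne hdj,
                Function.update_of_ne (by omega : d - 1 ≠ m + (j:ℕ))]
          rw [hfun, if_neg (by omega), if_neg hjc, deriv_const]
      · have h1 : m + (i : ℕ) ≠ m := by omega
        have h2 : m + (i : ℕ) ≠ d := by omega
        by_cases hje : (i : ℕ) = (j : ℕ)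
        · have hfun : (fun t => uaF m d (Function.update x (m + (j:ℕ)) t) (m + (i : ℕ)))
              = fun t => (m:ℝ)/(1-x d) * x (m+(i:ℕ)-1) - ((m:ℝ)/(1-x d) + 1) * t := by
            funext t
            have hu2 : Function.update x (m + (j:ℕ)) t (m+(i:ℕ)) = t := by
              rw [show m + (i:ℕ) = m + (j:ℕ) by omega]; exact Function.update_self _ _ _
            rw [uaF, if_neg h1, if_neg h2, Function.update_of_ne hdj,
                Function.update_of_ne (by omega : m + (i:ℕ) - 1 ≠ m + (j:ℕ)), hu2]
          rw [hfun, if_pos hje, derivLin1]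
        · by_cases hje2 : (i : ℕ) = (j : ℕ) + 1
          · have hfun : (fun t => uaF m d (Function.update x (m + (j:ℕ)) t) (m + (i : ℕ)))
                = fun t => (m:ℝ)/(1-x d) * t - ((m:ℝ)/(1-x d) + 1) * x (m+(i:ℕ)) := by
              funext t
              have hu2 : Function.update x (m + (j:ℕ)) t (m+(i:ℕ)-1) = t := by
                rw [show m + (i:ℕ) - 1 = m + (j:ℕ) by omega]; exact Function.update_self _ _ _
              rw [uaF, if_neg h1, if_neg h2, Function.update_of_ne hdj, hu2,
                  Function.update_of_ne (by omega : m + (i:ℕ) ≠ m + (j:ℕ))]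
            rw [hfun, if_neg hje, if_pos hje2, derivLin2]
          · have hfun : (fun t => uaF m d (Function.update x (m + (j:ℕ)) t) (m + (i : ℕ)))
                = fun t => (m:ℝ)/(1-x d) * x (m+(i:ℕ)-1) - ((m:ℝ)/(1-x d) + 1) * x (m+(i:ℕ)) := by
              funext t
              rw [uaF, if_neg h1, if_neg h2, Function.update_of_ne hdj,
                  Function.update_of_ne (by omega : m + (i:ℕ) - 1 ≠ m + (j:ℕ)),
                  Function.update_of_ne (by omega : m + (i:ℕ) ≠ m + (j:ℕ))]
            rw [hfun, if_neg hje, if_neg hje2, deriv_const]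

lemma algA (N : ℕ) (c t : ℝ) (y : ℕ → ℝ) :
    t^N + ∑ i ∈ Finset.range N, c^(N-i) * t^i *
      ((N.choose i : ℝ) - ∑ l ∈ Finset.range (N - i), (((i+l).choose i : ℝ)) * y (i+l))
    = (c+t)^N - ∑ j ∈ Finset.range N, c^(N-j) * (c+t)^j * y j := by
  have hbin : ∀ M : ℕ, (c+t)^M = ∑ i ∈ Finset.range (M+1), (M.choose i : ℝ) * c^(M-i) * t^i := by
    intro M
    rw [add_comm c t, add_pow]
    exact Finset.sum_congr rfl fun i _ => by ring
  have hR2 : ∑ j ∈ Finset.range N, c^(N-j) * (c+t)^j * y j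
      = ∑ j ∈ Finset.range N, ∑ i ∈ Finset.range (j+1),
          (j.choose i : ℝ) * c^(N-i) * t^i * y j := by
    refine Finset.sum_congr rfl fun j hj => ?_
    simp only [Finset.mem_range] at hj
    rw [hbin j, Finset.mul_sum, Finset.sum_mul]
    refine Finset.sum_congr rfl fun i hi => ?_
    simp only [Finset.mem_range] at hi
    have hpow : c^(N-i) = c^(N-j) * c^(j-i) := by
      rw [← pow_add]; congr 1; omega
    rw [hpow]; ring
  have hL2 : ∑ i ∈ Finset.range N, c^(N-i) * t^i *
        (∑ l ∈ Finset.range (N-i), (((i+l).choose i : ℝ)) * y (i+l))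
      = ∑ j ∈ Finset.range N, ∑ i ∈ Finset.range (j+1),
          (j.choose i : ℝ) * c^(N-i) * t^i * y j := by
    have h1 : ∀ i, c^(N-i) * t^i * (∑ l ∈ Finset.range (N-i), (((i+l).choose i : ℝ)) * y (i+l))
        = ∑ j ∈ Finset.Ico i N, (j.choose i : ℝ) * c^(N-i) * t^i * y j := by
      intro i
      rw [Finset.sum_Ico_eq_sum_range, Finset.mul_sum]
      exact Finset.sum_congr rfl fun l _ => by ring
    rw [Finset.sum_congr rfl (fun i _ => h1 i), Finset.range_eq_Ico, Finset.sum_Ico_Ico_comm]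
    simp only [← Finset.range_eq_Ico]
  have hexp : ∀ i, c^(N-i) * t^i *
        ((N.choose i : ℝ) - ∑ l ∈ Finset.range (N-i), (((i+l).choose i : ℝ)) * y (i+l))
      = (N.choose i : ℝ) * c^(N-i) * t^i
        - c^(N-i) * t^i * ∑ l ∈ Finset.range (N-i), (((i+l).choose i : ℝ)) * y (i+l) := by
    intro i; ring
  rw [Finset.sum_congr rfl (fun i _ => hexp i), Finset.sum_sub_distrib, hL2,
    hbin N, Finset.sum_range_succ, hR2]
  simp [Nat.choose_self]
  ring

lemma algB (P : ℕ) (c t : ℝ) (y : ℕ → ℝ) :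
    ∑ i ∈ Finset.range (P+2),
      (-1:ℝ)^(i+(P+1)) * (if i = P+1 then c * y P - t else if i = 0 then -(c * y 0)
        else c * (y (i-1) - y i)) * (-(c+t))^i * c^(P+1-i)
    = (-1:ℝ)^(P+2) * t * ((c+t)^(P+1) - ∑ j ∈ Finset.range (P+1), c^(P+1-j) * (c+t)^j * y j) := by
  have key : ∑ i ∈ Finset.range (P+2),
      (if i = P+1 then c * y P - t else if i = 0 then -(c * y 0)
        else c * (y (i-1) - y i)) * (c+t)^i * c^(P+1-i)
      = -(t * ((c+t)^(P+1) - ∑ j ∈ Finset.range (P+1), c^(P+1-j) * (c+t)^j * y j)) := by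
    rw [Finset.sum_range_succ, Finset.sum_range_succ']
    rw [if_pos rfl, if_neg (by omega), if_pos rfl]
    have hmid : ∑ i ∈ Finset.range P,
        (if i + 1 = P+1 then c * y P - t else if i + 1 = 0 then -(c * y 0)
          else c * (y (i+1-1) - y (i+1))) * (c+t)^(i+1) * c^(P+1-(i+1))
        = ∑ i ∈ Finset.range P,
            (y i * (c+t)^(i+1) * c^(P+1-i) - c * (y (i+1) * (c+t)^(i+1) * c^(P-i))) := by
      refine Finset.sum_congr rfl fun i hi => ?_
      simp only [Finset.mem_range] at hi
      rw [if_neg (by omega), if_neg (by omega)]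
      have h1 : i + 1 - 1 = i := rfl
      have h2 : P + 1 - (i + 1) = P - i := by omega
      have h3 : P + 1 - i = (P - i) + 1 := by omega
      rw [h1, h2, h3, pow_succ]
      ring
    rw [hmid, Finset.sum_sub_distrib]
    have hts : t * ∑ j ∈ Finset.range (P+1), c^(P+1-j) * (c+t)^j * y j
        = ∑ j ∈ Finset.range (P+1),
            (y j * (c+t)^(j+1) * c^(P+1-j) - c * (y j * (c+t)^j * c^(P+1-j))) := by
      rw [Finset.mul_sum]
      refine Finset.sum_congr rfl fun j hj => ?_
      ring
    have hA : ∑ j ∈ Finset.range (P+1), y j * (c+t)^(j+1) * c^(P+1-j)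
        = (∑ i ∈ Finset.range P, y i * (c+t)^(i+1) * c^(P+1-i)) + y P * (c+t)^(P+1) * c := by
      rw [Finset.sum_range_succ, show P + 1 - P = 1 by omega, pow_one]
    have hB : ∑ j ∈ Finset.range (P+1), c * (y j * (c+t)^j * c^(P+1-j))
        = (∑ i ∈ Finset.range P, c * (y (i+1) * (c+t)^(i+1) * c^(P-i)))
          + c * (y 0 * c^(P+1)) := by
      rw [Finset.sum_range_succ']
      congr 1
      · refine Finset.sum_congr rfl fun i hi => ?_
        simp only [Finset.mem_range] at hi
        have : P + 1 - (i+1) = P - i := by omega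
        rw [this]
      · simp
    have hgoal : -(t * ((c+t)^(P+1) - ∑ j ∈ Finset.range (P+1), c^(P+1-j) * (c+t)^j * y j))
        = t * (∑ j ∈ Finset.range (P+1), c^(P+1-j) * (c+t)^j * y j) - t * (c+t)^(P+1) := by
      ring
    rw [hgoal, hts, Finset.sum_sub_distrib, hA, hB]
    simp only [Nat.sub_self, Nat.sub_zero, pow_zero, pow_one, mul_one, one_mul]
    ring
  have hsp : ∀ (i : ℕ) (u : ℝ), (-1:ℝ)^(i+(P+1)) * (-u)^i = (-1)^(P+1) * u^i := by
    intro i u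
    rw [pow_add, neg_pow]
    have h : ((-1:ℝ)^i) * ((-1:ℝ)^i) = 1 := by rw [← mul_pow]; norm_num
    linear_combination ((-1:ℝ)^(P+1) * u^i) * h
  calc ∑ i ∈ Finset.range (P+2),
      (-1:ℝ)^(i+(P+1)) * (if i = P+1 then c * y P - t else if i = 0 then -(c * y 0)
        else c * (y (i-1) - y i)) * (-(c+t))^i * c^(P+1-i)
      = ∑ i ∈ Finset.range (P+2), (-1:ℝ)^(P+1) *
          ((if i = P+1 then c * y P - t else if i = 0 then -(c * y 0)
            else c * (y (i-1) - y i)) * (c+t)^i * c^(P+1-i)) := by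
        refine Finset.sum_congr rfl fun i _ => ?_
        calc (-1:ℝ)^(i+(P+1)) * (if i = P+1 then c * y P - t else if i = 0 then -(c * y 0)
              else c * (y (i-1) - y i)) * (-(c+t))^i * c^(P+1-i)
            = ((-1:ℝ)^(i+(P+1)) * (-(c+t))^i) *
                ((if i = P+1 then c * y P - t else if i = 0 then -(c * y 0)
                  else c * (y (i-1) - y i)) * c^(P+1-i)) := by ring
          _ = ((-1:ℝ)^(P+1) * (c+t)^i) *
                ((if i = P+1 then c * y P - t else if i = 0 then -(c * y 0)
                  else c * (y (i-1) - y i)) * c^(P+1-i)) := by rw [hsp]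
          _ = (-1:ℝ)^(P+1) *
                ((if i = P+1 then c * y P - t else if i = 0 then -(c * y 0)
                  else c * (y (i-1) - y i)) * (c+t)^i * c^(P+1-i)) := by ring
    _ = (-1:ℝ)^(P+1) * ∑ i ∈ Finset.range (P+2),
          ((if i = P+1 then c * y P - t else if i = 0 then -(c * y 0)
            else c * (y (i-1) - y i)) * (c+t)^i * c^(P+1-i)) := by
        rw [Finset.mul_sum]
    _ = (-1:ℝ)^(P+2) * t * ((c+t)^(P+1) - ∑ j ∈ Finset.range (P+1), c^(P+1-j) * (c+t)^j * y j) := by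
        rw [key, pow_succ]
        ring

/-- The characteristic polynomial `P(λ) = det(DF(x) − λI)` factors as
`P(λ) = (−1)^{d−m+1}·(1+λ)·Q(1+λ)`; in particular `−1` is an eigenvalue of `DF(x)`, and if
`x_m, …, x_d ≥ 0` with `x_m + ⋯ + x_d ≤ 1` then all coefficients of `Q` are nonnegative. -/
theorem uaJacobian_charpoly (m d : ℕ) (hm : 1 ≤ m) (hd : 2 * m < d)
    (x : ℕ → ℝ) (hx : x d < 1) :
    (∀ lam : ℝ,
      (uaJacobian m d x - lam • (1 : Matrix (Fin (d - m + 1)) (Fin (d - m + 1)) ℝ)).det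
        = (-1 : ℝ) ^ (d - m + 1) * (1 + lam) * uaQ m d x (1 + lam)) ∧
    ((-1 : ℝ) ∈ spectrum ℝ (uaJacobian m d x)) ∧
    ((∀ k ∈ Finset.Icc m d, 0 ≤ x k) → (∑ k ∈ Finset.Icc m d, x k) ≤ 1 →
      ∀ i ∈ Finset.range (d - m),
        0 ≤ ((m : ℝ) / (1 - x d)) ^ (d - m - i) *
          (((d - m).choose i : ℝ) -
            ∑ k ∈ Finset.Icc (m + i) (d - 1), (((k - m).choose i : ℝ)) * x k / (1 - x d))) := by
  have hone : (0:ℝ) < 1 - x d := by linarith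
  have hone' : (1:ℝ) - x d ≠ 0 := ne_of_gt hone
  obtain ⟨P, hP⟩ : ∃ P, d - m = P + 1 := ⟨d - m - 1, by omega⟩
  have hpart1 : ∀ lam : ℝ,
      (uaJacobian m d x - lam • (1 : Matrix (Fin (d - m + 1)) (Fin (d - m + 1)) ℝ)).det
        = (-1 : ℝ) ^ (d - m + 1) * (1 + lam) * uaQ m d x (1 + lam) := by
    intro lam
    have hM : ∀ i j : Fin (d - m + 1),
        (uaJacobian m d x - lam • (1 : Matrix (Fin (d - m + 1)) (Fin (d - m + 1)) ℝ)) i j =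
        if (j : ℕ) = d - m then
          (if (i : ℕ) = d - m then (m:ℝ)/(1-x d)^2 * x (d-1) - 1 - lam
           else if (i : ℕ) = 0 then -((m:ℝ)/(1-x d)^2 * x m)
           else (m:ℝ)/(1-x d)^2 * (x (m+(i:ℕ)-1) - x (m+(i:ℕ))))
        else if (i : ℕ) = (j : ℕ) then -((m:ℝ)/(1-x d) + (1+lam))
        else if (i : ℕ) = (j : ℕ)+1 then (m:ℝ)/(1-x d)
        else 0 := by
      intro i j
      rw [Matrix.sub_apply, Matrix.smul_apply, Matrix.one_apply, uaEntries m d hm hd x hx i j,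
        smul_eq_mul]
      simp only [Fin.ext_iff]
      split_ifs <;> first | ring1 | (exfalso; omega)
    have hdet := detAux (-((m:ℝ)/(1-x d) + (1+lam))) ((m:ℝ)/(1-x d)) (d - m)
      (fun i : Fin (d - m + 1) =>
        if (i : ℕ) = d - m then (m:ℝ)/(1-x d)^2 * x (d-1) - 1 - lam
        else if (i : ℕ) = 0 then -((m:ℝ)/(1-x d)^2 * x m)
        else (m:ℝ)/(1-x d)^2 * (x (m+(i:ℕ)-1) - x (m+(i:ℕ))))
      (uaJacobian m d x - lam • 1) hM
    have hQ : uaQ m d x (1+lam) = ((m:ℝ)/(1-x d) + (1+lam))^(d-m)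
        - ∑ j ∈ Finset.range (d-m), ((m:ℝ)/(1-x d))^((d-m)-j) *
            ((m:ℝ)/(1-x d)+(1+lam))^j * (x (m+j)/(1-x d)) := by
      rw [uaQ]
      have hIcc : ∀ i ∈ Finset.range (d-m),
          ((m:ℝ)/(1-x d)) ^ (d - m - i) * (1+lam) ^ i *
            (((d - m).choose i : ℝ) -
              ∑ k ∈ Finset.Icc (m + i) (d - 1), (((k - m).choose i : ℝ)) * x k / (1 - x d))
          = ((m:ℝ)/(1-x d)) ^ (d - m - i) * (1+lam) ^ i *
            (((d - m).choose i : ℝ) -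
              ∑ l ∈ Finset.range ((d-m) - i), (((i+l).choose i : ℝ)) * (x (m+(i+l))/(1-x d))) := by
        intro i hi
        congr 2
        have he : Finset.Icc (m+i) (d-1) = Finset.Ico (m+i) d := by
          rw [← Finset.Ico_add_one_right_eq_Icc]
          congr 1
          omega
        rw [he, Finset.sum_Ico_eq_sum_range, show d - (m+i) = (d-m) - i by omega]
        refine Finset.sum_congr rfl fun l hl => ?_
        rw [show m + i + l - m = i + l by omega, show m + i + l = m + (i+l) by omega]
        ring
      rw [Finset.sum_congr rfl hIcc]
      exact algA (d-m) ((m:ℝ)/(1-x d)) (1+lam) (fun j => x (m+j)/(1-x d))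
    rw [hdet, hQ]
    rw [Fin.sum_univ_eq_sum_range (fun k : ℕ =>
      (-1:ℝ) ^ (k + (d - m)) *
        (if k = d - m then (m:ℝ)/(1-x d)^2 * x (d-1) - 1 - lam
         else if k = 0 then -((m:ℝ)/(1-x d)^2 * x m)
         else (m:ℝ)/(1-x d)^2 * (x (m+k-1) - x (m+k))) *
        (-((m:ℝ)/(1-x d) + (1+lam)))^k * ((m:ℝ)/(1-x d))^((d-m) - k)) (d - m + 1)]
    rw [hP]
    have hfin : ∀ k ∈ Finset.range (P+1+1),
        (-1:ℝ) ^ (k + (P+1)) *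
          (if k = P+1 then (m:ℝ)/(1-x d)^2 * x (d-1) - 1 - lam
           else if k = 0 then -((m:ℝ)/(1-x d)^2 * x m)
           else (m:ℝ)/(1-x d)^2 * (x (m+k-1) - x (m+k))) *
          (-((m:ℝ)/(1-x d) + (1+lam)))^k * ((m:ℝ)/(1-x d))^((P+1) - k)
        = (-1:ℝ) ^ (k + (P+1)) *
          (if k = P+1 then (m:ℝ)/(1-x d) * (x (m+P)/(1-x d)) - (1+lam)
           else if k = 0 then -((m:ℝ)/(1-x d) * (x (m+0)/(1-x d)))
           else (m:ℝ)/(1-x d) * ((x (m+(k-1))/(1-x d)) - (x (m+k)/(1-x d)))) *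
          (-((m:ℝ)/(1-x d) + (1+lam)))^k * ((m:ℝ)/(1-x d))^((P+1) - k) := by
      intro k hk
      have hV : (if k = P+1 then (m:ℝ)/(1-x d)^2 * x (d-1) - 1 - lam
           else if k = 0 then -((m:ℝ)/(1-x d)^2 * x m)
           else (m:ℝ)/(1-x d)^2 * (x (m+k-1) - x (m+k)))
          = (if k = P+1 then (m:ℝ)/(1-x d) * (x (m+P)/(1-x d)) - (1+lam)
           else if k = 0 then -((m:ℝ)/(1-x d) * (x (m+0)/(1-x d)))
           else (m:ℝ)/(1-x d) * ((x (m+(k-1))/(1-x d)) - (x (m+k)/(1-x d)))) := by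
        have hcc : ∀ A : ℝ, (m:ℝ)/(1-x d) * (A/(1-x d)) = (m:ℝ)/(1-x d)^2 * A := by
          intro A
          rw [div_mul_div_comm, div_mul_eq_mul_div, sq]
        by_cases h1 : k = P+1
        · rw [if_pos h1, if_pos h1, show d - 1 = m + P by omega, hcc]
          ring
        · rw [if_neg h1, if_neg h1]
          by_cases h0 : k = 0
          · rw [if_pos h0, if_pos h0, show m + 0 = m by omega, hcc]
          · rw [if_neg h0, if_neg h0, show m + k - 1 = m + (k-1) by omega, mul_sub, mul_sub,
              hcc, hcc]
      rw [hV]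
    rw [Finset.sum_congr rfl hfin]
    exact algB P ((m:ℝ)/(1-x d)) (1+lam) (fun j => x (m+j)/(1-x d))
  refine ⟨hpart1, ?_, ?_⟩
  · rw [spectrum.mem_iff]
    intro hu
    rw [Matrix.isUnit_iff_isUnit_det] at hu
    have he : (algebraMap ℝ (Matrix (Fin (d-m+1)) (Fin (d-m+1)) ℝ) (-1) - uaJacobian m d x)
        = -(uaJacobian m d x - (-1 : ℝ) • 1) := by
      rw [Algebra.algebraMap_eq_smul_one, neg_sub]
    have hz : (uaJacobian m d x - (-1:ℝ) • (1 : Matrix (Fin (d - m + 1)) (Fin (d - m + 1)) ℝ)).det = 0 := by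
      rw [hpart1 (-1)]
      norm_num
    rw [he, Matrix.det_neg, hz, mul_zero] at hu
    simpa using hu
  · intro hpos hsum i _
    have hc0 : (0:ℝ) ≤ (m:ℝ)/(1-x d) := div_nonneg (Nat.cast_nonneg m) (le_of_lt hone)
    refine mul_nonneg (pow_nonneg hc0 _) ?_
    rw [sub_nonneg]
    have hkey : ∑ k ∈ Finset.Icc (m + i) (d - 1), (((k - m).choose i : ℝ)) * x k
        ≤ (((d-m).choose i : ℝ)) * (1 - x d) := by
      have h1 : ∑ k ∈ Finset.Icc (m + i) (d - 1), (((k - m).choose i : ℝ)) * x k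
          ≤ ∑ k ∈ Finset.Icc (m + i) (d - 1), (((d-m).choose i : ℝ)) * x k := by
        refine Finset.sum_le_sum fun k hk => ?_
        simp only [Finset.mem_Icc] at hk
        refine mul_le_mul_of_nonneg_right ?_ (hpos k (Finset.mem_Icc.mpr ⟨by omega, by omega⟩))
        exact_mod_cast Nat.choose_le_choose i (by omega : k - m ≤ d - m)
      have h2 : ∑ k ∈ Finset.Icc (m + i) (d - 1), x k ≤ 1 - x d := by
        have hnot : d ∉ Finset.Icc (m + i) (d - 1) := by
          simp only [Finset.mem_Icc]
          omega
        have hsub : insert d (Finset.Icc (m + i) (d - 1)) ⊆ Finset.Icc m d := by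
          intro k hk
          simp only [Finset.mem_insert, Finset.mem_Icc] at hk ⊢
          omega
        have h3 : ∑ k ∈ insert d (Finset.Icc (m + i) (d - 1)), x k ≤ ∑ k ∈ Finset.Icc m d, x k :=
          Finset.sum_le_sum_of_subset_of_nonneg hsub
            (fun k hk _ => hpos k hk)
        rw [Finset.sum_insert hnot] at h3
        linarith
      calc ∑ k ∈ Finset.Icc (m + i) (d - 1), (((k - m).choose i : ℝ)) * x k
          ≤ ∑ k ∈ Finset.Icc (m + i) (d - 1), (((d-m).choose i : ℝ)) * x k := h1
        _ = (((d-m).choose i : ℝ)) * ∑ k ∈ Finset.Icc (m + i) (d - 1), x k := by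
            rw [Finset.mul_sum]
        _ ≤ (((d-m).choose i : ℝ)) * (1 - x d) := by
            refine mul_le_mul_of_nonneg_left h2 (Nat.cast_nonneg _)
    have hdiv : ∑ k ∈ Finset.Icc (m + i) (d - 1), (((k - m).choose i : ℝ)) * x k / (1 - x d)
        = (∑ k ∈ Finset.Icc (m + i) (d - 1), (((k - m).choose i : ℝ)) * x k) / (1 - x d) := by
      rw [Finset.sum_div]
    rw [hdiv, div_le_iff₀ hone]
    linarith
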